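/- Let 𝔤 be a Lie superalgebra with root decomposition relative to a CSA 𝔥 contained in 𝔨, let 𝔪_r be a real form of 𝔤 containing the real form 𝔥_r of 𝔥, with associated antilinear involution X ↦ X̃ fixing 𝔪_r. If all roots are purely imaginary on 𝔥_r (so that 𝔤_α̃ = 𝔤_{-α} for every root α), then 𝔪_r + 𝔟⁺ = 𝔤, where 𝔟⁺ = 𝔥 ⊕ Σ_{α∈P} 𝔤_α is a Borel subalgebra. -/

import Mathlib

/-- Let `𝔤` be a (super) Lie algebra with root decomposition relative to a CSA `𝔥`,
let `𝔪_r` be a real form of `𝔤` (the fixed points of the antilinear involution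
`X ↦ conj X`) containing the real form `𝔥_r` of `𝔥`. If all roots are purely imaginary
on `𝔥_r`, so that `conj` maps `𝔤_α` into `𝔤_{-α}` for every root `α`, then
`𝔪_r + 𝔟⁺ = 𝔤`, where `𝔟⁺ = 𝔥 ⊕ Σ_{α∈P} 𝔤_α` is a Borel subalgebra. -/
theorem stmt14 {L : Type*} [LieRing L] [LieAlgebra ℂ L]
    (conj : L →ₗ[ℝ] L)
    (hconjsmul : ∀ (c : ℂ) (x : L), conj (c • x) = (starRingEnd ℂ) c • conj x)
    (hinv : ∀ x, conj (conj x) = x)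
    (hlie : ∀ x y, conj ⁅x, y⁆ = ⁅conj x, conj y⁆)
    (H : LieSubalgebra ℂ L) [DecidableEq (H →ₗ[ℂ] ℂ)]
    (hHconj : ∀ x ∈ H, conj x ∈ H)
    (Δ : Finset (H →ₗ[ℂ] ℂ)) (gsp : (H →ₗ[ℂ] ℂ) → Submodule ℂ L)
    (hroot : ∀ α ∈ Δ, ∀ h : H, ∀ x ∈ gsp α, ⁅(h : L), x⁆ = α h • x)
    (hdec : DirectSum.IsInternal fun i : Option {α // α ∈ Δ} =>
      i.elim H.toSubmodule fun α => gsp α.1)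
    (P : Finset (H →ₗ[ℂ] ℂ)) (hPsub : P ⊆ Δ)
    (hpos : ∀ α ∈ Δ, (α ∈ P ∨ -α ∈ P) ∧ ¬(α ∈ P ∧ -α ∈ P))
    (hconjroot : ∀ α ∈ Δ, ∀ x ∈ gsp α, conj x ∈ gsp (-α)) :
    ∀ x : L, ∃ m b : L, conj m = m ∧
      b ∈ (H.toSubmodule ⊔ ⨆ α ∈ P, gsp α) ∧ x = m + b := by
  classical
  set B : Submodule ℂ L := H.toSubmodule ⊔ ⨆ α ∈ P, gsp α with hB
  set M : Submodule ℝ L := LinearMap.eqLocus conj LinearMap.id with hM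
  set S : Submodule ℝ L := M ⊔ B.restrictScalars ℝ with hS
  have hBS : ∀ x ∈ B, x ∈ S := fun x hx => Submodule.mem_sup_right hx
  have key : ∀ x : L, x ∈ S := by
    intro x
    have htop := hdec.submodule_iSup_eq_top
    have hx : x ∈ ⨆ i : Option {α // α ∈ Δ},
        (Option.elim i H.toSubmodule fun α => gsp α.1) := htop ▸ Submodule.mem_top
    refine Submodule.iSup_induction _ (motive := fun y => y ∈ S) hx ?_ (zero_mem S)
      (fun a b ha hb => add_mem ha hb)
    rintro i y hy
    cases i with
    | none =>
        exact hBS y (Submodule.mem_sup_left hy)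
    | some α =>
        by_cases hα : α.1 ∈ P
        · refine hBS y (Submodule.mem_sup_right ?_)
          exact Submodule.mem_iSup_of_mem α.1 (Submodule.mem_iSup_of_mem hα hy)
        · have hneg : -α.1 ∈ P := ((hpos α.1 α.2).1).resolve_left hα
          have hconjy : conj y ∈ gsp (-α.1) := hconjroot α.1 α.2 y hy
          have hm : (y + conj y) ∈ M := by
            show conj (y + conj y) = LinearMap.id (y + conj y)
            simp [map_add, hinv, add_comm]
          have hbB : -(conj y) ∈ B := by
            refine neg_mem (Submodule.mem_sup_right ?_)
            exact Submodule.mem_iSup_of_mem (-α.1) (Submodule.mem_iSup_of_mem hneg hconjy)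
          have : y = (y + conj y) + (-(conj y)) := by abel
          rw [this]
          exact add_mem (Submodule.mem_sup_left hm) (hBS _ hbB)
  intro x
  obtain ⟨m, hm, b, hb, hx⟩ := Submodule.mem_sup.mp (key x)
  exact ⟨m, b, hm, hb, hx.symm⟩
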